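/- The optical metric of the cosmological C-metric with cosmological constant Λ is projectively equivalent to that with Λ = 0: writing F_Λ(y) = F₀(y) − Λ/(3A²), the Christoffel symbols of h_Λ = F_Λ⁻²dy² + (GF_Λ)⁻¹dx² + (G/F_Λ)dφ² satisfy Γⁱⱼₖ(h_Λ) = Γⁱⱼₖ(h₀) + δⁱⱼωₖ + δⁱₖωⱼ where ω = ½ d(ln F₀ − ln F_Λ). -/

import Mathlib

/-- Partial derivative of a function on `ℝⁿ` in the `i`-th coordinate direction. -/
noncomputable def pderiv {n : ℕ} (f : (Fin n → ℝ) → ℝ) (i : Fin n)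
    (x : Fin n → ℝ) : ℝ :=
  deriv (fun s => f (Function.update x i s)) (x i)

/-- Christoffel symbols `Γⁱⱼₖ = ½ gⁱˡ(∂ⱼ g_{lk} + ∂ₖ g_{lj} − ∂_l g_{jk})`. -/
noncomputable def christoffel {n : ℕ}
    (g : (Fin n → ℝ) → Matrix (Fin n) (Fin n) ℝ) (x : Fin n → ℝ)
    (i j k : Fin n) : ℝ :=
  (1 / 2) * ∑ l, (g x)⁻¹ i l *
    (pderiv (fun y => g y l k) j x + pderiv (fun y => g y l j) k x
      - pderiv (fun y => g y j k) l x)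

/-- The optical metric `h = F⁻²dy² + (GF)⁻¹dx² + (G/F)dφ²` of the C-metric in
coordinates `(y, x, φ)`. -/
noncomputable def copt (F G : ℝ → ℝ) (p : Fin 3 → ℝ) :
    Matrix (Fin 3) (Fin 3) ℝ :=
  Matrix.diagonal ![((F (p 0)) ^ 2)⁻¹, (G (p 1) * F (p 0))⁻¹, G (p 1) / F (p 0)]

section
variable (F G : ℝ → ℝ) (p : Fin 3 → ℝ)

lemma pd00_1 : pderiv (fun q => copt F G q 0 0) 1 p = 0 := by
  simp [pderiv, copt, Matrix.diagonal, Function.update]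
lemma pd00_2 : pderiv (fun q => copt F G q 0 0) 2 p = 0 := by
  simp [pderiv, copt, Matrix.diagonal, Function.update]
lemma pd11_2 : pderiv (fun q => copt F G q 1 1) 2 p = 0 := by
  simp [pderiv, copt, Matrix.diagonal, Function.update]
lemma pd22_2 : pderiv (fun q => copt F G q 2 2) 2 p = 0 := by
  simp [pderiv, copt, Matrix.diagonal, Function.update]

lemma pd00_0 (hF : DifferentiableAt ℝ F (p 0)) (hG : DifferentiableAt ℝ G (p 1))
    (hF0 : F (p 0) ≠ 0) (hG0 : G (p 1) ≠ 0) : pderiv (fun q => copt F G q 0 0) 0 p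
    = -2 * deriv F (p 0) / F (p 0) ^ 3 := by
  unfold pderiv
  rw [show (fun s => copt F G (Function.update p 0 s) 0 0) = (fun s => ((F s : ℝ) ^ 2)⁻¹)
    from funext fun s => by simp [copt, Matrix.diagonal, Function.update]]
  rw [HasDerivAt.deriv (f := fun s => ((F s : ℝ) ^ 2)⁻¹) ((hF.hasDerivAt.pow 2).inv (pow_ne_zero 2 hF0))]
  field_simp
  simp only [Pi.pow_apply]
  ring

lemma pd11_0 (hF : DifferentiableAt ℝ F (p 0)) (hG : DifferentiableAt ℝ G (p 1))
    (hF0 : F (p 0) ≠ 0) (hG0 : G (p 1) ≠ 0) : pderiv (fun q => copt F G q 1 1) 0 p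
    = -(deriv F (p 0)) / (G (p 1) * F (p 0) ^ 2) := by
  unfold pderiv
  rw [show (fun s => copt F G (Function.update p 0 s) 1 1)
      = (fun s => ((G (p 1) * F s : ℝ))⁻¹)
    from funext fun s => by simp [copt, Matrix.diagonal, Function.update]]
  rw [HasDerivAt.deriv (f := fun s => ((G (p 1) * F s : ℝ))⁻¹) ((hF.hasDerivAt.const_mul (G (p 1))).inv (mul_ne_zero hG0 hF0))]
  field_simp

lemma pd11_1 (hF : DifferentiableAt ℝ F (p 0)) (hG : DifferentiableAt ℝ G (p 1))
    (hF0 : F (p 0) ≠ 0) (hG0 : G (p 1) ≠ 0) : pderiv (fun q => copt F G q 1 1) 1 p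
    = -(deriv G (p 1)) / (G (p 1) ^ 2 * F (p 0)) := by
  unfold pderiv
  rw [show (fun s => copt F G (Function.update p 1 s) 1 1)
      = (fun s => ((G s * F (p 0) : ℝ))⁻¹)
    from funext fun s => by simp [copt, Matrix.diagonal, Function.update]]
  rw [HasDerivAt.deriv (f := fun s => ((G s * F (p 0) : ℝ))⁻¹) ((hG.hasDerivAt.mul_const (F (p 0))).inv (mul_ne_zero hG0 hF0))]
  field_simp

lemma pd22_0 (hF : DifferentiableAt ℝ F (p 0)) (hG : DifferentiableAt ℝ G (p 1))
    (hF0 : F (p 0) ≠ 0) (hG0 : G (p 1) ≠ 0) : pderiv (fun q => copt F G q 2 2) 0 p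
    = -(G (p 1) * deriv F (p 0)) / F (p 0) ^ 2 := by
  unfold pderiv
  rw [show (fun s => copt F G (Function.update p 0 s) 2 2)
      = (fun s => (G (p 1) / F s : ℝ))
    from funext fun s => by simp [copt, Matrix.diagonal, Function.update]]
  rw [HasDerivAt.deriv (f := fun s => (G (p 1) / F s : ℝ)) ((hasDerivAt_const (p 0) (G (p 1))).div hF.hasDerivAt hF0)]
  field_simp
  ring

lemma pd22_1 (hF : DifferentiableAt ℝ F (p 0)) (hG : DifferentiableAt ℝ G (p 1))
    (hF0 : F (p 0) ≠ 0) (hG0 : G (p 1) ≠ 0) : pderiv (fun q => copt F G q 2 2) 1 p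
    = deriv G (p 1) / F (p 0) := by
  unfold pderiv
  rw [show (fun s => copt F G (Function.update p 1 s) 2 2)
      = (fun s => (G s / F (p 0) : ℝ))
    from funext fun s => by simp [copt, Matrix.diagonal, Function.update]]
  rw [(hG.hasDerivAt.div_const (F (p 0))).deriv]

end


lemma copt_inv (F G : ℝ → ℝ) (p : Fin 3 → ℝ) (hF : F (p 0) ≠ 0) (hG : G (p 1) ≠ 0) :
    (copt F G p)⁻¹ =
      Matrix.diagonal ![(F (p 0)) ^ 2, G (p 1) * F (p 0), F (p 0) / G (p 1)] := by
  apply Matrix.inv_eq_right_inv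
  rw [copt, Matrix.diagonal_mul_diagonal]
  ext i j
  fin_cases i <;> fin_cases j <;>
    simp [Matrix.diagonal, mul_comm] <;> field_simp

lemma pderiv_copt_offdiag (F G : ℝ → ℝ) (p : Fin 3 → ℝ) (l k : Fin 3) (h : l ≠ k) (i : Fin 3) :
    pderiv (fun q => copt F G q l k) i p = 0 := by
  simp [pderiv, copt, Matrix.diagonal_apply_ne _ h]

set_option maxHeartbeats 2000000 in
lemma key (F1 F2 G : ℝ → ℝ) (p : Fin 3 → ℝ)
    (hF1 : DifferentiableAt ℝ F1 (p 0)) (hF2 : DifferentiableAt ℝ F2 (p 0))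
    (hG : DifferentiableAt ℝ G (p 1))
    (h10 : F1 (p 0) ≠ 0) (h20 : F2 (p 0) ≠ 0) (hG0 : G (p 1) ≠ 0)
    (hd : deriv F2 (p 0) = deriv F1 (p 0)) (i j k : Fin 3) :
    christoffel (copt F2 G) p i j k = christoffel (copt F1 G) p i j k
      + (if i = j then (if k = 0 then
          (1 / 2) * (deriv F1 (p 0) / F1 (p 0) - deriv F2 (p 0) / F2 (p 0)) else 0) else 0)
      + (if i = k then (if j = 0 then
          (1 / 2) * (deriv F1 (p 0) / F1 (p 0) - deriv F2 (p 0) / F2 (p 0)) else 0) else 0) := by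
  have fin3 : ∀ i : Fin 3, i = 0 ∨ i = 1 ∨ i = 2 := by decide
  rcases fin3 i with rfl | rfl | rfl <;> rcases fin3 j with rfl | rfl | rfl <;>
    rcases fin3 k with rfl | rfl | rfl <;>
  · simp only [christoffel, Fin.sum_univ_three, copt_inv _ _ _ h10 hG0,
      copt_inv _ _ _ h20 hG0, Matrix.diagonal, Matrix.of_apply, Matrix.cons_val',
      Matrix.cons_val_zero, Matrix.cons_val_one, Matrix.head_cons, Matrix.empty_val',
      Matrix.cons_val_fin_one, Matrix.head_fin_const, Matrix.cons_val_two, Matrix.tail_cons,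
      pd00_0 _ _ _ hF1 hG h10 hG0, pd00_0 _ _ _ hF2 hG h20 hG0,
      pd00_1, pd00_2, pd11_2, pd22_2,
      pd11_0 _ _ _ hF1 hG h10 hG0, pd11_0 _ _ _ hF2 hG h20 hG0,
      pd11_1 _ _ _ hF1 hG h10 hG0, pd11_1 _ _ _ hF2 hG h20 hG0,
      pd22_0 _ _ _ hF1 hG h10 hG0, pd22_0 _ _ _ hF2 hG h20 hG0,
      pd22_1 _ _ _ hF1 hG h10 hG0, pd22_1 _ _ _ hF2 hG h20 hG0,
      pderiv_copt_offdiag F1 G p 0 1 (by decide), pderiv_copt_offdiag F1 G p 0 2 (by decide),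
      pderiv_copt_offdiag F1 G p 1 0 (by decide), pderiv_copt_offdiag F1 G p 1 2 (by decide),
      pderiv_copt_offdiag F1 G p 2 0 (by decide), pderiv_copt_offdiag F1 G p 2 1 (by decide),
      pderiv_copt_offdiag F2 G p 0 1 (by decide), pderiv_copt_offdiag F2 G p 0 2 (by decide),
      pderiv_copt_offdiag F2 G p 1 0 (by decide), pderiv_copt_offdiag F2 G p 1 2 (by decide),
      pderiv_copt_offdiag F2 G p 2 0 (by decide), pderiv_copt_offdiag F2 G p 2 1 (by decide)]
    simp only [hd, if_true, if_false, eq_self_iff_true, one_ne_zero,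
      show (1 : Fin 3) ≠ 0 by decide, show (2 : Fin 3) ≠ 0 by decide,
      show (0 : Fin 3) ≠ 1 by decide, show (0 : Fin 3) ≠ 2 by decide,
      show (1 : Fin 3) ≠ 2 by decide, show (2 : Fin 3) ≠ 1 by decide,
      ite_self]
    try norm_num
    try field_simp
    try ring

/-- The optical metric of the cosmological C-metric with cosmological constant `Λ`
is projectively equivalent to that with `Λ = 0`: with
`F₀(y) = y² − 2mAy³ + e²A²y⁴ − 1`, `F_Λ = F₀ − Λ/(3A²)`,
`G(x) = 1 − x² − 2mAx³ − e²A²x⁴`, the Christoffel symbols satisfy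
`Γⁱⱼₖ(h_Λ) = Γⁱⱼₖ(h₀) + δⁱⱼωₖ + δⁱₖωⱼ` where `ω = ½ d(ln F₀ − ln F_Λ)`. -/
theorem stmt13 (m e A Λ : ℝ) (hA : A ≠ 0) (p : Fin 3 → ℝ) :
    let F0 : ℝ → ℝ := fun y => y ^ 2 - 2 * m * A * y ^ 3 + e ^ 2 * A ^ 2 * y ^ 4 - 1
    let FΛ : ℝ → ℝ := fun y => F0 y - Λ / (3 * A ^ 2)
    let G : ℝ → ℝ := fun x => 1 - x ^ 2 - 2 * m * A * x ^ 3 - e ^ 2 * A ^ 2 * x ^ 4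
    0 < F0 (p 0) → 0 < FΛ (p 0) → 0 < G (p 1) →
    ∀ i j k : Fin 3,
      let ω : Fin 3 → ℝ := fun l => if l = 0 then
        (1 / 2) * (deriv F0 (p 0) / F0 (p 0) - deriv FΛ (p 0) / FΛ (p 0)) else 0
      christoffel (copt FΛ G) p i j k = christoffel (copt F0 G) p i j k
        + (if i = j then ω k else 0) + (if i = k then ω j else 0) := by
  intro F0 FΛ G h1 h2 h3 i j k ω
  have dF0 : DifferentiableAt ℝ F0 (p 0) := by unfold F0; fun_prop
  have dFΛ : DifferentiableAt ℝ FΛ (p 0) := by unfold FΛ F0; fun_prop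
  have dG : DifferentiableAt ℝ G (p 1) := by unfold G; fun_prop
  have hd : deriv FΛ (p 0) = deriv F0 (p 0) := by
    unfold FΛ; exact deriv_sub_const _
  exact key F0 FΛ G p dF0 dFΛ dG (ne_of_gt h1) (ne_of_gt h2) (ne_of_gt h3) hd i j k
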